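/- Let f : ℂ → ℂ be a C¹ function with compact support. Then for every z ∈ ℂ, f(z) = (1/π) ∫_ℂ (∂f/∂ζ̄)(ζ) / (z - ζ) dA(ζ), where ∂f/∂ζ̄ = ½(∂f/∂u + i ∂f/∂v) with ζ = u + iv. -/

import Mathlib

open MeasureTheory

/-- The Wirtinger derivative `∂f/∂ζ̄ = ½(∂f/∂u + i ∂f/∂v)` of `f : ℂ → ℂ`. -/
noncomputable def dbar (f : ℂ → ℂ) (ζ : ℂ) : ℂ :=
  (1 / 2) * (fderiv ℝ f ζ 1 + Complex.I * fderiv ℝ f ζ Complex.I)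

open Complex Set Filter Topology Real

private lemma key_alg (L : ℂ →L[ℝ] ℂ) (θ : ℝ) :
    L 1 + Complex.I * L Complex.I
      = Complex.exp (θ * Complex.I) *
        (L (Complex.exp (θ * Complex.I)) +
          Complex.I * L (Complex.exp (θ * Complex.I) * Complex.I)) := by
  set c := Real.cos θ with hc
  set s := Real.sin θ with hs
  have he : Complex.exp (θ * Complex.I) = c • (1 : ℂ) + s • Complex.I := by
    rw [Complex.exp_mul_I]
    simp only [Complex.real_smul, mul_one]
    rw [Complex.ofReal_cos, Complex.ofReal_sin]
  have hIe : Complex.exp (θ * Complex.I) * Complex.I = (-s) • (1 : ℂ) + c • Complex.I := by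
    rw [he]
    simp only [Complex.real_smul, Complex.ofReal_neg, mul_one]
    have hI : Complex.I * Complex.I = -1 := Complex.I_mul_I
    linear_combination (s : ℂ) * hI
  rw [hIe, he, map_add, map_add, ContinuousLinearMap.map_smul, ContinuousLinearMap.map_smul, ContinuousLinearMap.map_smul, ContinuousLinearMap.map_smul]
  have h1 : (c : ℂ) ^ 2 + (s : ℂ) ^ 2 = 1 := by
    rw [hc, hs]
    norm_cast
    exact Real.cos_sq_add_sin_sq θ
  simp only [Complex.real_smul, Complex.ofReal_neg]
  linear_combination (-(L 1) - Complex.I * L Complex.I) * h1 + (L 1 * (s : ℂ) ^ 2 - L Complex.I * (c : ℂ) * (s : ℂ)) * Complex.I_sq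

private lemma setIntegral_prod_symm' {E : Type*} [NormedAddCommGroup E] [NormedSpace ℝ E]
    (f : ℝ × ℝ → E) {s t : Set ℝ} (hf : IntegrableOn f (s ×ˢ t)) :
    ∫ p in s ×ˢ t, f p = ∫ y in t, ∫ x in s, f (x, y) := by
  have hf' : Integrable f ((volume.restrict s).prod (volume.restrict t)) := by
    rw [Measure.prod_restrict s t]
    exact hf
  have h := integral_prod_symm f hf'
  rw [Measure.prod_restrict s t] at h
  rw [Measure.volume_eq_prod]
  exact h

private lemma setIntegral_prod' {E : Type*} [NormedAddCommGroup E] [NormedSpace ℝ E]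
    (f : ℝ × ℝ → E) {s t : Set ℝ} (hf : IntegrableOn f (s ×ˢ t)) :
    ∫ p in s ×ˢ t, f p = ∫ x in s, ∫ y in t, f (x, y) := by
  rw [Measure.volume_eq_prod]
  exact setIntegral_prod f hf

/-- The Cauchy–Green (Pompeiu) formula for compactly supported `C¹` functions. -/
theorem cauchy_green_pompeiu (f : ℂ → ℂ) (hf : ContDiff ℝ 1 f)
    (hsupp : HasCompactSupport f) (z : ℂ) :
    f z = (Real.pi : ℂ)⁻¹ * ∫ ζ : ℂ, dbar f ζ / (z - ζ) := by
  set L : ℂ → ℂ →L[ℝ] ℂ := fderiv ℝ f with hLdef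
  have hfd : ∀ ζ, HasFDerivAt f (L ζ) ζ := fun ζ =>
    (hf.differentiable one_ne_zero ζ).hasFDerivAt
  have hLc : Continuous L := hf.continuous_fderiv one_ne_zero
  obtain ⟨R, hR0, hR⟩ := hsupp.isBounded.subset_closedBall_lt 0 z
  have hL0 : ∀ ζ, ζ ∉ Metric.closedBall z R → L ζ = 0 := by
    intro ζ hζ
    by_contra h
    exact hζ (hR (support_fderiv_subset ℝ h))
  set e : ℝ → ℂ := fun θ => Complex.exp (θ * Complex.I) with hedef
  have he_ne : ∀ θ, e θ ≠ 0 := fun θ => Complex.exp_ne_zero _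
  have he_abs : ∀ θ : ℝ, ‖e θ‖ = 1 := fun θ => Complex.norm_exp_ofReal_mul_I θ
  -- derivatives
  have hKder : ∀ (θ r : ℝ),
      HasDerivAt (fun r : ℝ => f (z + r * e θ)) (L (z + r * e θ) (e θ)) r := by
    intro θ r
    have h1 : HasDerivAt (fun r : ℝ => z + (r : ℂ) * e θ) (e θ) r := by
      simpa using ((Complex.ofRealCLM.hasDerivAt (x := r)).mul_const (e θ)).const_add z
    exact (hfd _).comp_hasDerivAt r h1
  have hHder : ∀ (r θ : ℝ),
      HasDerivAt (fun θ : ℝ => f (z + r * e θ))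
        (L (z + r * e θ) ((r : ℂ) * (e θ * Complex.I))) θ := by
    intro r θ
    have h0 : HasDerivAt (fun θ : ℝ => (θ : ℂ) * Complex.I) Complex.I θ := by
      simpa using (Complex.ofRealCLM.hasDerivAt (x := θ)).mul_const Complex.I
    have h1 : HasDerivAt e (e θ * Complex.I) θ := h0.cexp
    have h2 : HasDerivAt (fun θ : ℝ => z + (r : ℂ) * e θ) ((r : ℂ) * (e θ * Complex.I)) θ :=
      (h1.const_mul _).const_add z
    exact (hfd _).comp_hasDerivAt θ h2
  -- radial integral
  have hA1 : ∀ θ : ℝ, (∫ r in Ioi (0 : ℝ), L (z + r * e θ) (e θ)) = -f z := by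
    intro θ
    set K : ℝ → ℂ := fun r => f (z + r * e θ) with hKdef
    have hcd : ContDiff ℝ 1 K := by
      apply hf.comp
      exact contDiff_const.add ((Complex.ofRealCLM.contDiff).mul contDiff_const)
    have hcs : HasCompactSupport K := by
      apply HasCompactSupport.intro (isCompact_Icc (a := -R) (b := R))
      intro r hr
      have hrR : R < |r| := by
        simp only [Set.mem_Icc, not_and_or, not_le] at hr
        rcases hr with h | h
        · rw [abs_of_neg (by linarith)]; linarith
        · rw [abs_of_pos (by linarith)]; linarith
      show f (z + ↑r * e θ) = 0
      apply image_eq_zero_of_notMem_tsupport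
      intro hmem
      have h2 := hR hmem
      rw [Metric.mem_closedBall, Complex.dist_eq] at h2
      have h3 : ‖z + ↑r * e θ - z‖ = |r| := by
        simp [he_abs θ]
      rw [h3] at h2
      linarith
    have h3 := HasCompactSupport.integral_Ioi_deriv_eq hcd hcs 0
    have h4 : ∀ r : ℝ, deriv K r = L (z + r * e θ) (e θ) := fun r => (hKder θ r).deriv
    have h5 : K 0 = f z := by simp [hKdef]
    calc (∫ r in Ioi (0 : ℝ), L (z + r * e θ) (e θ))
        = ∫ r in Ioi (0 : ℝ), deriv K r :=
          setIntegral_congr_fun measurableSet_Ioi fun r _ => (h4 r).symm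
      _ = -K 0 := h3
      _ = -f z := by rw [h5]
  -- angular integral
  have hB1 : ∀ r : ℝ,
      (∫ θ in Ioo (-π) π, L (z + r * e θ) ((r : ℂ) * (e θ * Complex.I))) = 0 := by
    intro r
    have hcont : Continuous (fun θ : ℝ => L (z + r * e θ) ((r : ℂ) * (e θ * Complex.I))) := by
      apply Continuous.clm_apply
      · exact hLc.comp (by fun_prop)
      · fun_prop
    rw [← integral_Ioc_eq_integral_Ioo,
      ← intervalIntegral.integral_of_le (by linarith [Real.pi_pos])]
    rw [intervalIntegral.integral_eq_sub_of_hasDerivAt (fun θ _ => hHder r θ)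
      (hcont.intervalIntegrable _ _)]
    have hepi : e π = -1 := by
      simp [hedef, Complex.exp_pi_mul_I]
    have henpi : e (-π) = -1 := by
      rw [hedef]
      show Complex.exp (((-π : ℝ) : ℂ) * Complex.I) = -1
      rw [show ((-π : ℝ) : ℂ) = -(π : ℂ) by push_cast; ring, neg_mul, Complex.exp_neg,
        Complex.exp_pi_mul_I]
      norm_num
    rw [hepi, henpi, sub_self]
  -- the two integrands on the product space
  set A : ℝ × ℝ → ℂ := fun p => (2 : ℂ)⁻¹ * L (z + p.1 * e p.2) (e p.2) with hAdef
  set B : ℝ × ℝ → ℂ := fun p =>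
    (2 : ℂ)⁻¹ * (Complex.I * L (z + p.1 * e p.2) (e p.2 * Complex.I)) with hBdef
  set S : Set (ℝ × ℝ) := Ioi (0 : ℝ) ×ˢ Ioo (-π) π with hSdef
  set T : Set (ℝ × ℝ) := Ioc (0 : ℝ) R ×ˢ Ioo (-π) π with hTdef
  have hSmeas : MeasurableSet S := measurableSet_Ioi.prod measurableSet_Ioo
  have hvanish : ∀ p : ℝ × ℝ, p ∈ S \ T → L (z + p.1 * e p.2) = 0 := by
    intro p hp
    apply hL0
    rw [Metric.mem_closedBall, Complex.dist_eq]
    have hp1 : R < p.1 := by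
      rcases hp with ⟨⟨h1, h2⟩, h3⟩
      by_contra h
      exact h3 ⟨⟨h1, not_lt.mp h⟩, h2⟩
    have h3 : ‖z + ↑p.1 * e p.2 - z‖ = |p.1| := by
      simp [he_abs p.2]
    rw [h3, abs_of_pos (lt_trans hR0 hp1)]
    push_neg
    exact hp1
  have hIntOf : ∀ G : ℝ × ℝ → ℂ, Continuous G → (∀ p ∈ S \ T, G p = (0 : ℂ)) →
      IntegrableOn G S := by
    intro G hGc hG0
    have hK : IntegrableOn G (Icc (0 : ℝ) R ×ˢ Icc (-π) π) :=
      hGc.continuousOn.integrableOn_compact (isCompact_Icc.prod isCompact_Icc)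
    have h1 : IntegrableOn G T :=
      hK.mono_set (prod_mono Ioc_subset_Icc_self Ioo_subset_Icc_self)
    have h2 : IntegrableOn G (S \ T) := by
      have hz : IntegrableOn (fun _ : ℝ × ℝ => (0 : ℂ)) (S \ T) := integrableOn_zero
      exact hz.congr_fun (fun p hp => (hG0 p hp).symm)
        (hSmeas.diff (measurableSet_Ioc.prod measurableSet_Ioo))
    apply (h1.union h2).mono_set
    intro p hp
    by_cases hpT : p ∈ T
    · exact Or.inl hpT
    · exact Or.inr ⟨hp, hpT⟩
  have hAc : Continuous A := by
    apply continuous_const.mul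
    apply Continuous.clm_apply
    · exact hLc.comp (by fun_prop)
    · fun_prop
  have hBc : Continuous B := by
    apply continuous_const.mul
    apply continuous_const.mul
    apply Continuous.clm_apply
    · exact hLc.comp (by fun_prop)
    · fun_prop
  have hAint : IntegrableOn A S := by
    apply hIntOf A hAc
    intro p hp
    simp [hAdef, hvanish p hp]
  have hBint : IntegrableOn B S := by
    apply hIntOf B hBc
    intro p hp
    simp [hBdef, hvanish p hp]
  -- computation of ∫ A and ∫ B
  have hIA : (∫ p in S, A p) = -(π : ℂ) * f z := by
    rw [hSdef, setIntegral_prod_symm' A hAint]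
    have hinner : ∀ θ ∈ Ioo (-π) π, (∫ r in Ioi (0 : ℝ), A (r, θ)) = (2 : ℂ)⁻¹ * (-f z) := by
      intro θ _
      rw [hAdef]
      show (∫ r in Ioi (0 : ℝ), (2 : ℂ)⁻¹ * L (z + r * e θ) (e θ)) = _
      rw [integral_const_mul, hA1 θ]
    rw [setIntegral_congr_fun measurableSet_Ioo hinner, setIntegral_const, Real.volume_real_Ioo_of_le (by linarith [Real.pi_pos]),
      Complex.real_smul]
    push_cast
    ring
  have hIB : (∫ p in S, B p) = 0 := by
    rw [hSdef, setIntegral_prod' B hBint]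
    have hinner : ∀ r ∈ Ioi (0 : ℝ), (∫ θ in Ioo (-π) π, B (r, θ)) = 0 := by
      intro r hr
      have hrne : (r : ℂ) ≠ 0 := Complex.ofReal_ne_zero.mpr (ne_of_gt hr)
      have hBeq : ∀ θ : ℝ, B (r, θ) =
          (Complex.I / (2 * r)) * L (z + r * e θ) ((r : ℂ) * (e θ * Complex.I)) := by
        intro θ
        have hmap : L (z + r * e θ) ((r : ℂ) * (e θ * Complex.I))
            = (r : ℂ) * L (z + r * e θ) (e θ * Complex.I) := by
          have : ((r : ℂ)) * (e θ * Complex.I) = r • (e θ * Complex.I) := by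
            rw [Complex.real_smul]
          rw [this, ContinuousLinearMap.map_smul, Complex.real_smul]
        rw [hBdef]
        show (2 : ℂ)⁻¹ * (Complex.I * L (z + r * e θ) (e θ * Complex.I)) = _
        rw [hmap]
        field_simp
      simp_rw [hBeq]
      rw [integral_const_mul, hB1 r, mul_zero]
    rw [setIntegral_congr_fun measurableSet_Ioi hinner, integral_zero]
  -- the main computation
  have hmain : (∫ ζ : ℂ, dbar f ζ / (z - ζ)) = (π : ℂ) * f z := by
    have htrans : (∫ ζ : ℂ, dbar f ζ / (z - ζ)) = ∫ w : ℂ, dbar f (z + w) / (-w) := by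
      rw [← integral_add_left_eq_self (fun ζ => dbar f ζ / (z - ζ)) z]
      congr 1
      funext w
      rw [sub_add_cancel_left]
    have hsymm : ∀ p : ℝ × ℝ, Complex.polarCoord.symm p = (p.1 : ℂ) * e p.2 := by
      intro p
      rw [Complex.polarCoord_symm_apply, hedef]
      show _ = (p.1 : ℂ) * Complex.exp ((p.2 : ℂ) * Complex.I)
      rw [Complex.exp_mul_I, ← Complex.ofReal_cos, ← Complex.ofReal_sin]
    have hpolar := (Complex.integral_comp_polarCoord_symm
      (fun w => dbar f (z + w) / (-w))).symm
    have htarget : polarCoord.target = S := rfl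
    have hpt : ∀ p ∈ S, p.1 • (dbar f (z + Complex.polarCoord.symm p) /
        (-(Complex.polarCoord.symm p))) = -(A p + B p) := by
      intro p hp
      have hp1 : (0 : ℝ) < p.1 := hp.1
      have hp1ne : ((p.1 : ℝ) : ℂ) ≠ 0 := Complex.ofReal_ne_zero.mpr (ne_of_gt hp1)
      rw [hsymm p]
      have hkey := key_alg (L (z + p.1 * e p.2)) p.2
      rw [hAdef, hBdef]
      show p.1 • (dbar f (z + ↑p.1 * e p.2) / (-(↑p.1 * e p.2)))
        = -((2 : ℂ)⁻¹ * L (z + p.1 * e p.2) (e p.2)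
            + (2 : ℂ)⁻¹ * (Complex.I * L (z + p.1 * e p.2) (e p.2 * Complex.I)))
      have hdb : dbar f (z + ↑p.1 * e p.2)
          = (1 / 2) * (L (z + ↑p.1 * e p.2) 1
              + Complex.I * L (z + ↑p.1 * e p.2) Complex.I) := rfl
      rw [hdb, hkey, Complex.real_smul]
      have heθ : e p.2 = Complex.exp ((p.2 : ℂ) * Complex.I) := rfl
      rw [← heθ]
      field_simp [hp1ne, he_ne p.2]
    rw [htrans, hpolar, htarget, setIntegral_congr_fun hSmeas hpt, integral_neg,
      integral_add hAint hBint, hIA, hIB]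
    ring
  rw [hmain, ← mul_assoc, inv_mul_cancel₀ (Complex.ofReal_ne_zero.mpr Real.pi_ne_zero), one_mul]
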